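/- If U, Y are cumulative arrival and departure flows with Y ≤ U, α a maximum arrival curve for U and β a minimum service curve for the server, then (α ⊘ β) is a maximum arrival curve for the output Y, i.e., Y(t) - Y(s) ≤ (α⊘β)(t-s) for all s ≤ t, where (α⊘β)(t) = sup over u ≥ 0 of (α(t+u) - β(u)). -/
import Mathlib


/-- Output characterization: `α ⊘ β` is a maximum arrival curve for the departure flow `Y`,
where `(α ⊘ β)(t) = sup_{u ≥ 0} (α(t+u) - β(u))`. -/
theorem output_arrival_curve (U Y : ℕ → ℝ) (α β : ℕ → EReal)
    (hU : Monotone U) (hY : Monotone Y) (hU0 : U 0 = 0) (hY0 : Y 0 = 0)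
    (hYU : ∀ t, Y t ≤ U t)
    (harr : ∀ s t : ℕ, s ≤ t → ((U t - U s : ℝ) : EReal) ≤ α (t - s))
    (hserv : ∀ t : ℕ, (⨅ s ∈ Finset.Iic t, (β s + ((U (t - s) : ℝ) : EReal))) ≤ (Y t : EReal)) :
    ∀ s t : ℕ, s ≤ t →
      ((Y t - Y s : ℝ) : EReal) ≤ ⨆ u : ℕ, (α (t - s + u) - β u) := by
  intro s t hst
  obtain ⟨v, hv, hveq⟩ := Finset.exists_mem_eq_inf' (Finset.nonempty_Iic (a := s))
      (fun v => β v + ((U (s - v) : ℝ) : EReal))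
  have hvs : v ≤ s := Finset.mem_Iic.mp hv
  have hle : β v + ((U (s - v) : ℝ) : EReal) ≤ (Y s : EReal) := by
    calc β v + ((U (s - v) : ℝ) : EReal)
        = (Finset.Iic s).inf' (Finset.nonempty_Iic)
            (fun v => β v + ((U (s - v) : ℝ) : EReal)) := hveq.symm
      _ = (Finset.Iic s).inf (fun v => β v + ((U (s - v) : ℝ) : EReal)) :=
            Finset.inf'_eq_inf _ _
      _ = ⨅ x ∈ Finset.Iic s, (β x + ((U (s - x) : ℝ) : EReal)) :=
            Finset.inf_eq_iInf _ _
      _ ≤ (Y s : EReal) := hserv s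
  have hidx : t - (s - v) = t - s + v := by omega
  have halpha : ((U t - U (s - v) : ℝ) : EReal) ≤ α (t - s + v) := by
    have := harr (s - v) t (le_trans (Nat.sub_le _ _) hst)
    rwa [hidx] at this
  refine le_trans ?_ (le_iSup (fun u => α (t - s + u) - β u) v)
  have htri : β v = ⊥ ∨ β v = ⊤ ∨ ∃ b : ℝ, β v = b := by
    rcases β v with _ | _ | b
    · exact Or.inl rfl
    · exact Or.inr (Or.inl rfl)
    · exact Or.inr (Or.inr ⟨b, rfl⟩)
  rcases htri with hb | hb | ⟨b, hb⟩
  · -- β v = ⊥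
    have hαne : α (t - s + v) ≠ ⊥ := fun h => by
      rw [h] at halpha; exact (EReal.coe_ne_bot _) (le_bot_iff.mp halpha)
    rw [hb, EReal.sub_bot hαne]
    exact le_top
  · -- β v = ⊤
    exfalso
    rw [hb, EReal.top_add_of_ne_bot (EReal.coe_ne_bot _)] at hle
    exact (EReal.coe_lt_top (Y s)).not_ge hle
  · -- β v real
    rw [hb] at hle
    have hle' : b + U (s - v) ≤ Y s := by
      exact_mod_cast hle
    have hreal : Y t - Y s ≤ (U t - U (s - v)) - b := by
      have := hYU t
      linarith
    rw [hb]
    calc ((Y t - Y s : ℝ) : EReal) ≤ (((U t - U (s - v)) - b : ℝ) : EReal) := by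
          exact_mod_cast hreal
      _ = ((U t - U (s - v) : ℝ) : EReal) - (b : EReal) := by
          rw [EReal.coe_sub]
      _ ≤ α (t - s + v) - (b : EReal) := EReal.sub_le_sub halpha le_rfl
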